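/- Let m, k be positive integers, N = m²k, and for a positive integer n define T(n) = Σ_{d ∈ ℤ/nℤ} ((d − 4k)/n) · #{ j ∈ ℤ/nℤ : j² ≡ d (mod n) and gcd(N + 1 + j·m, n) = 1 }, where ((d−4k)/ℓ^w) = ((d−4k)/ℓ)^w with (·/ℓ) the Legendre symbol for odd primes ℓ. Then for every prime ℓ not dividing 2k, the series P(ℓ) := 1 + Σ_{w ≥ 1} T(ℓ^w)/(ℓ^{2w−1}·(ℓ − ε_ℓ(m))) converges and P(ℓ) = ( ℓ³ − ε_ℓ(m)·ℓ² − (1 + ε_ℓ(m)·ε_ℓ(N−1))·ℓ − 1 − ε_ℓ(N−1)·(k/ℓ) ) / ( (ℓ² − 1)·(ℓ − ε_ℓ(m)) ), where ε_ℓ(a) = 1 if ℓ ∤ a and ε_ℓ(a) = 0 if ℓ | a. -/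

import Mathlib

open Finset

section CharSums

variable {ℓ : ℕ} [Fact ℓ.Prime]

lemma card_sqrts_eq (hℓ : ℓ ≠ 2) (d : ZMod ℓ) [DecidableEq (ZMod ℓ)] :
    ((univ.filter (fun y : ZMod ℓ => y ^ 2 = d)).card : ℤ) = quadraticChar (ZMod ℓ) d + 1 := by
  have h := quadraticChar_card_sqrts (by rwa [ZMod.ringChar_zmod_n]) d
  rw [← h]
  congr 2
  rw [Set.toFinset_setOf]

lemma sum_qc (hℓ : ℓ ≠ 2) {a : ZMod ℓ} (ha : a ≠ 0) :
    ∑ y : ZMod ℓ, quadraticChar (ZMod ℓ) (y ^ 2 - a) = -1 := by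
  classical
  have hchar : ringChar (ZMod ℓ) ≠ 2 := by rwa [ZMod.ringChar_zmod_n]
  set χ := quadraticChar (ZMod ℓ) with hχ
  have hstep : ∑ y : ZMod ℓ, χ (y ^ 2 - a)
      = ∑ d : ZMod ℓ, ((univ.filter (fun y : ZMod ℓ => y ^ 2 = d)).card : ℤ) * χ (d - a) := by
    calc ∑ y : ZMod ℓ, χ (y ^ 2 - a)
        = ∑ y : ZMod ℓ, ∑ d : ZMod ℓ, if y ^ 2 = d then χ (d - a) else 0 := by
          refine Finset.sum_congr rfl fun y _ => ?_
          rw [Finset.sum_ite_eq univ (y ^ 2) (fun d => χ (d - a)), if_pos (mem_univ _)]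
      _ = ∑ d : ZMod ℓ, ∑ y : ZMod ℓ, if y ^ 2 = d then χ (d - a) else 0 := Finset.sum_comm
      _ = _ := by
          refine Finset.sum_congr rfl fun d _ => ?_
          rw [← Finset.sum_filter, Finset.sum_const, nsmul_eq_mul]
  rw [hstep]
  have hstep2 : ∑ d : ZMod ℓ, ((univ.filter (fun y : ZMod ℓ => y ^ 2 = d)).card : ℤ) * χ (d - a)
      = (∑ d : ZMod ℓ, χ d * χ (d - a)) + ∑ d : ZMod ℓ, χ (d - a) := by
    rw [← Finset.sum_add_distrib]
    refine Finset.sum_congr rfl fun d _ => ?_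
    rw [card_sqrts_eq hℓ d, add_mul, one_mul]
  rw [hstep2]
  have h2 : ∑ d : ZMod ℓ, χ (d - a) = 0 := by
    have h0 := quadraticChar_sum_zero hchar
    rw [← h0]
    exact Fintype.sum_equiv (Equiv.subRight a) _ _ (fun d => rfl)
  have h1 : ∑ d : ZMod ℓ, χ d * χ (d - a) = -1 := by
    have hre : ∑ e : ZMod ℓ, χ (a * e) * χ (a * e - a) = ∑ d : ZMod ℓ, χ d * χ (d - a) :=
      Fintype.sum_equiv (Equiv.mulLeft₀ a ha) _ _ (fun e => rfl)
    rw [← hre]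
    have hsq : χ a * χ a = 1 := by
      rw [← map_mul]
      exact quadraticChar_one_iff_isSquare (mul_ne_zero ha ha) |>.mpr ⟨a, rfl⟩
    have hre2 : ∀ e : ZMod ℓ, χ (a * e) * χ (a * e - a) = χ e * (χ (-1) * χ (1 - e)) := by
      intro e
      have : a * e - a = a * (-1 * (1 - e)) := by ring
      rw [this, map_mul, map_mul, map_mul]
      calc χ a * χ e * (χ a * (χ (-1) * χ (1 - e)))
          = (χ a * χ a) * (χ e * (χ (-1) * χ (1 - e))) := by ring
        _ = χ e * (χ (-1) * χ (1 - e)) := by rw [hsq, one_mul]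
    simp_rw [hre2]
    have hj : ∑ e : ZMod ℓ, χ e * (χ (-1) * χ (1 - e)) = χ (-1) * jacobiSum χ χ := by
      rw [jacobiSum, Finset.mul_sum]
      exact Finset.sum_congr rfl fun e _ => by ring
    rw [hj]
    have hinv : χ⁻¹ = χ := (quadraticChar_isQuadratic (ZMod ℓ)).inv
    have hJ : jacobiSum χ χ = -χ (-1) := by
      have := jacobiSum_nontrivial_inv (quadraticChar_ne_one hchar)
      rwa [hinv] at this
    rw [hJ]
    have hm1 : χ (-1) * χ (-1) = 1 := by
      rw [← map_mul]
      norm_num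
    calc χ (-1) * - χ (-1) = -(χ (-1) * χ (-1)) := by ring
      _ = -1 := by rw [hm1]
  rw [h1, h2, add_zero]

lemma sum_qc_sq (hℓ : ℓ ≠ 2) {a : ZMod ℓ} (ha : a ≠ 0) :
    ∑ y : ZMod ℓ, (quadraticChar (ZMod ℓ) (y ^ 2 - a)) ^ 2
      = (ℓ : ℤ) - 1 - quadraticChar (ZMod ℓ) a := by
  classical
  set χ := quadraticChar (ZMod ℓ) with hχ
  have key : ∀ y : ZMod ℓ, (χ (y ^ 2 - a)) ^ 2 = 1 - (if y ^ 2 = a then 1 else 0) := by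
    intro y
    by_cases h : y ^ 2 = a
    · rw [h, sub_self, if_pos rfl]
      rw [hχ]
      simp
    · rw [quadraticChar_sq_one (sub_ne_zero.mpr h), if_neg h, sub_zero]
  simp_rw [key]
  rw [Finset.sum_sub_distrib, Finset.sum_const, Finset.sum_boole, card_sqrts_eq hℓ a,
    Finset.card_univ, ZMod.card, nsmul_eq_mul, mul_one]
  ring

lemma isUnit_castHom_iff {ℓ : ℕ} [Fact ℓ.Prime] {e : ℕ} (he : e ≠ 0) (x : ZMod (ℓ ^ e)) :
    IsUnit x ↔ IsUnit (ZMod.castHom (dvd_pow_self ℓ he) (ZMod ℓ) x) := by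
  have hp : ℓ.Prime := Fact.out
  have : NeZero (ℓ ^ e) := ⟨pow_ne_zero e hp.pos.ne'⟩
  have hx : ((x.val : ℕ) : ZMod (ℓ ^ e)) = x := ZMod.natCast_rightInverse x
  have hfx : ZMod.castHom (dvd_pow_self ℓ he) (ZMod ℓ) x = ((x.val : ℕ) : ZMod ℓ) := by
    rw [ZMod.castHom_apply, ← ZMod.natCast_val]
  rw [hfx, ZMod.isUnit_iff_coprime]
  constructor
  · intro h
    have h2 : IsUnit ((x.val : ℕ) : ZMod (ℓ ^ e)) := by rwa [hx]
    exact (Nat.coprime_pow_right_iff (Nat.pos_of_ne_zero he) x.val ℓ).mp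
      ((ZMod.isUnit_iff_coprime _ _).mp h2)
  · intro h
    have h2 : x.val.Coprime (ℓ ^ e) := Nat.Coprime.pow_right _ h
    have := (ZMod.isUnit_iff_coprime x.val (ℓ ^ e)).mpr h2
    rwa [hx] at this

lemma sum_castHom {ℓ : ℕ} [Fact ℓ.Prime] (e : ℕ) (g : ZMod ℓ → ℤ) :
    ∑ j : ZMod (ℓ ^ (e + 1)),
        g (ZMod.castHom (dvd_pow_self ℓ (Nat.succ_ne_zero e)) (ZMod ℓ) j)
      = (ℓ : ℤ) ^ e * ∑ y : ZMod ℓ, g y := by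
  classical
  have hp : ℓ.Prime := Fact.out
  set f := ZMod.castHom (dvd_pow_self ℓ (Nat.succ_ne_zero e)) (ZMod ℓ) with hf
  have hsurj : Function.Surjective f := by
    intro y
    exact ⟨((y.val : ℕ) : ZMod (ℓ ^ (e + 1))), by
      rw [map_natCast]
      exact ZMod.natCast_rightInverse y⟩
  -- all fibers have the same cardinality
  have hcard : ∀ y : ZMod ℓ,
      (univ.filter (fun j : ZMod (ℓ ^ (e + 1)) => f j = y)).card
        = (univ.filter (fun j : ZMod (ℓ ^ (e + 1)) => f j = 0)).card := by
    intro y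
    obtain ⟨j₀, hj₀⟩ := hsurj y
    refine Finset.card_nbij' (fun j => j - j₀) (fun j => j + j₀) ?_ ?_ ?_ ?_
    · intro a ha
      simp only [coe_filter, mem_filter, mem_univ, true_and, Set.mem_setOf_eq] at ha ⊢
      rw [map_sub, ha, hj₀, sub_self]
    · intro a ha
      simp only [coe_filter, mem_filter, mem_univ, true_and, Set.mem_setOf_eq] at ha ⊢
      rw [map_add, ha, hj₀, zero_add]
    · intro a _; simp
    · intro a _; simp
  have htot : (ℓ : ℕ) * (univ.filter (fun j : ZMod (ℓ ^ (e + 1)) => f j = 0)).card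
      = ℓ ^ (e + 1) := by
    have h1 : (univ : Finset (ZMod (ℓ ^ (e + 1)))).card
        = ∑ y : ZMod ℓ, (univ.filter (fun j : ZMod (ℓ ^ (e + 1)) => f j = y)).card :=
      Finset.card_eq_sum_card_fiberwise (fun x _ => mem_univ (f x))
    rw [Finset.card_univ, ZMod.card] at h1
    have h2 : ∑ y : ZMod ℓ, (univ.filter (fun j : ZMod (ℓ ^ (e + 1)) => f j = y)).card
        = ℓ * (univ.filter (fun j : ZMod (ℓ ^ (e + 1)) => f j = 0)).card := by
      simp_rw [hcard]
      rw [Finset.sum_const, Finset.card_univ, ZMod.card, smul_eq_mul]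
    exact (h1.trans h2).symm
  have hcard' : ∀ y : ZMod ℓ,
      (univ.filter (fun j : ZMod (ℓ ^ (e + 1)) => f j = y)).card = ℓ ^ e := by
    intro y
    rw [hcard y]
    exact Nat.eq_of_mul_eq_mul_left hp.pos (htot.trans (pow_succ' ℓ e))
  rw [← Finset.sum_fiberwise_of_maps_to (fun x _ => mem_univ (f x)) (fun j => g (f j))]
  rw [Finset.mul_sum]
  refine Finset.sum_congr rfl fun y _ => ?_
  have : ∀ j ∈ univ.filter (fun j : ZMod (ℓ ^ (e + 1)) => f j = y), g (f j) = g y := by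
    intro j hj
    rw [(mem_filter.mp hj).2]
  rw [Finset.sum_congr rfl this, Finset.sum_const, hcard' y, nsmul_eq_mul]
  push_cast
  ring

/-- For `N = m²k` and `n = ℓ^w` a power of an odd prime, the character sum
`T(ℓ^w) = Σ_{d mod ℓ^w} ((d-4k)/ℓ)^w · #{j mod ℓ^w : j² ≡ d, gcd(N+1+jm, ℓ^w) = 1}`. -/
noncomputable def Tpp (m k ℓ : ℕ) [Fact ℓ.Prime] (w : ℕ) : ℤ :=
  ∑ d : ZMod (ℓ ^ w),
    legendreSym ℓ ((d.val : ℤ) - 4 * k) ^ w *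
      (Nat.card {j : ZMod (ℓ ^ w) //
        j ^ 2 = d ∧ IsUnit (((m ^ 2 * k : ℕ) : ZMod (ℓ ^ w)) + 1 + j * m)} : ℤ)

lemma int_pow_eq (t : ℤ) (ht : t = 0 ∨ t = 1 ∨ t = -1) (w : ℕ) :
    t ^ (w + 1) = if Even w then t else t ^ 2 := by
  rcases ht with rfl | rfl | rfl
  · rcases Nat.even_or_odd w with h | h <;> simp
  · simp
  · rcases Nat.even_or_odd w with h | h
    · rw [if_pos h, Odd.neg_one_pow (Even.add_one h)]
    · rw [if_neg (Nat.not_even_iff_odd.mpr h), Even.neg_one_pow (Odd.add_one h)]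
      norm_num

lemma Tpp_eq (m k ℓ : ℕ) [Fact ℓ.Prime] (hm : 1 ≤ m) (hk : 1 ≤ k)
    (hℓ : ¬ℓ ∣ 2 * k) (w : ℕ) :
    Tpp m k ℓ (w + 1)
      = (ℓ : ℤ) ^ w *
        (if Even w then
          (-1 - (if ℓ ∣ m then 0 else 1) * (if ℓ ∣ m ^ 2 * k - 1 then 0 else 1))
         else ((ℓ : ℤ) - 1 - legendreSym ℓ k
            - (if ℓ ∣ m then 0 else 1) * (if ℓ ∣ m ^ 2 * k - 1 then 0 else 1))) := by
  classical
  have hp : ℓ.Prime := Fact.out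
  have hℓ2 : ℓ ≠ 2 := by rintro rfl; exact hℓ ⟨k, rfl⟩
  have hℓk : ¬ℓ ∣ k := fun h => hℓ (h.mul_left 2)
  have hchar : ringChar (ZMod ℓ) ≠ 2 := by rwa [ZMod.ringChar_zmod_n]
  set n := ℓ ^ (w + 1) with hn
  set χ := quadraticChar (ZMod ℓ) with hχ
  set f := ZMod.castHom (dvd_pow_self ℓ (Nat.succ_ne_zero w)) (ZMod ℓ) with hf
  set P : ZMod n → Prop :=
    fun j => IsUnit (((m ^ 2 * k : ℕ) : ZMod n) + 1 + j * m) with hP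
  set a : ZMod ℓ := ((4 * k : ℕ) : ZMod ℓ) with ha_def
  have ha : a ≠ 0 := by
    rw [ha_def, Ne, ZMod.natCast_eq_zero_iff]
    intro h
    rcases (Nat.Prime.dvd_mul hp).mp h with h4 | hk'
    · have h4' : ℓ ∣ 2 ^ 2 := by rw [show (2 : ℕ) ^ 2 = 4 by norm_num]; exact h4
      exact hℓ2 ((Nat.prime_dvd_prime_iff_eq hp Nat.prime_two).mp (hp.dvd_of_dvd_pow h4'))
    · exact hℓk hk'
  -- Step 1: rewrite Tpp as a sum over j
  have step1 : Tpp m k ℓ (w + 1)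
      = ∑ j : ZMod n,
          if P j then (legendreSym ℓ (((j ^ 2 : ZMod n).val : ℤ) - 4 * k)) ^ (w + 1) else 0 := by
    unfold Tpp
    have hcount : ∀ d : ZMod n, (Nat.card {j : ZMod n // j ^ 2 = d ∧ P j} : ℤ)
        = ∑ j : ZMod n, if j ^ 2 = d ∧ P j then 1 else 0 := by
      intro d
      rw [Nat.card_eq_fintype_card, Fintype.card_subtype, Finset.sum_boole]
    calc ∑ d : ZMod n, (legendreSym ℓ ((d.val : ℤ) - 4 * k)) ^ (w + 1) *
            (Nat.card {j : ZMod n // j ^ 2 = d ∧ P j} : ℤ)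
        = ∑ d : ZMod n, ∑ j : ZMod n,
            if j ^ 2 = d ∧ P j then (legendreSym ℓ ((d.val : ℤ) - 4 * k)) ^ (w + 1) else 0 := by
          refine Finset.sum_congr rfl fun d _ => ?_
          rw [hcount d, Finset.mul_sum]
          exact Finset.sum_congr rfl fun j _ => by rw [mul_ite, mul_one, mul_zero]
      _ = ∑ j : ZMod n, ∑ d : ZMod n,
            if j ^ 2 = d ∧ P j then (legendreSym ℓ ((d.val : ℤ) - 4 * k)) ^ (w + 1) else 0 :=
          Finset.sum_comm
      _ = _ := by
          refine Finset.sum_congr rfl fun j _ => ?_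
          by_cases hPj : P j
          · simp only [hPj, and_true, if_true]
            rw [Finset.sum_ite_eq univ (j ^ 2)
              (fun d => (legendreSym ℓ ((d.val : ℤ) - 4 * k)) ^ (w + 1)), if_pos (mem_univ _)]
          · simp [hPj]
  -- Step 2: express everything through the reduction mod ℓ
  set g : ZMod ℓ → ℤ := fun y =>
    if IsUnit (((m ^ 2 * k : ℕ) : ZMod ℓ) + 1 + y * (m : ZMod ℓ))
    then (χ (y ^ 2 - a)) ^ (w + 1) else 0 with hg
  have step2 : Tpp m k ℓ (w + 1) = ∑ j : ZMod n, g (f j) := by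
    rw [step1]
    refine Finset.sum_congr rfl fun j _ => ?_
    have hleg : legendreSym ℓ (((j ^ 2 : ZMod n).val : ℤ) - 4 * k) = χ ((f j) ^ 2 - a) := by
      unfold legendreSym
      rw [hχ]
      congr 1
      push_cast
      rw [ZMod.natCast_val, ← ZMod.castHom_apply (h := dvd_pow_self ℓ (Nat.succ_ne_zero w)),
        map_pow]
      rw [ha_def]
      push_cast
      ring
    have hunit : P j ↔ IsUnit (((m ^ 2 * k : ℕ) : ZMod ℓ) + 1 + (f j) * (m : ZMod ℓ)) := by
      have h0 : P j ↔ IsUnit (f (((m ^ 2 * k : ℕ) : ZMod n) + 1 + j * (m : ZMod n))) :=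
        isUnit_castHom_iff (Nat.succ_ne_zero w) _
      rw [h0, map_add, map_add, map_mul, map_natCast, map_natCast, map_one]
    simp only [hg]
    by_cases hPj : P j
    · rw [if_pos hPj, if_pos (hunit.mp hPj), hleg]
    · rw [if_neg hPj, if_neg (fun h => hPj (hunit.mpr h))]
  rw [step2, sum_castHom w g]
  congr 1
  -- Step 3: evaluate the sum over ZMod ℓ
  have hSfull1 : ∑ y : ZMod ℓ, χ (y ^ 2 - a) = -1 := sum_qc hℓ2 ha
  have hSfull2 : ∑ y : ZMod ℓ, (χ (y ^ 2 - a)) ^ 2 = (ℓ : ℤ) - 1 - χ a := sum_qc_sq hℓ2 ha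
  have hχa : χ a = legendreSym ℓ k := by
    have h2 : ((2 : ℕ) : ZMod ℓ) ≠ 0 := by
      rw [Ne, ZMod.natCast_eq_zero_iff]
      intro h
      exact hℓ2 ((Nat.prime_dvd_prime_iff_eq hp Nat.prime_two).mp h)
    have haeq : a = ((2 : ℕ) : ZMod ℓ) ^ 2 * ((k : ℕ) : ZMod ℓ) := by
      rw [ha_def]; push_cast; ring
    rw [haeq, map_mul, quadraticChar_sq_one' h2, one_mul]
    unfold legendreSym
    rw [hχ, Int.cast_natCast]
  have hexp : ∀ y : ZMod ℓ, (χ (y ^ 2 - a)) ^ (w + 1)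
      = if Even w then χ (y ^ 2 - a) else (χ (y ^ 2 - a)) ^ 2 := fun y =>
    int_pow_eq _ (quadraticChar_isQuadratic (ZMod ℓ) _) w
  by_cases hdm : ℓ ∣ m
  -- Case ℓ ∣ m
  · have hm0 : ((m : ℕ) : ZMod ℓ) = 0 := (ZMod.natCast_eq_zero_iff m ℓ).mpr hdm
    have hN0 : ((m ^ 2 * k : ℕ) : ZMod ℓ) = 0 := by
      rw [ZMod.natCast_eq_zero_iff]
      exact Dvd.dvd.mul_right (dvd_pow hdm two_ne_zero) k
    have hQ : ∀ y : ZMod ℓ, IsUnit (((m ^ 2 * k : ℕ) : ZMod ℓ) + 1 + y * (m : ZMod ℓ)) := by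
      intro y
      rw [hN0, hm0, mul_zero, add_zero, zero_add]
      exact isUnit_one
    have : ∑ y : ZMod ℓ, g y = ∑ y : ZMod ℓ, (χ (y ^ 2 - a)) ^ (w + 1) := by
      refine Finset.sum_congr rfl fun y _ => ?_
      simp only [hg]
      exact if_pos (hQ y)
    rw [this]
    by_cases hw : Even w
    · simp_rw [hexp, if_pos hw, if_pos hdm]
      rw [hSfull1]
      ring
    · simp_rw [hexp, if_neg hw, if_pos hdm]
      rw [hSfull2, hχa]
      ring
  -- Case ℓ ∤ m
  · have hμ : ((m : ℕ) : ZMod ℓ) ≠ 0 := by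
      rw [Ne, ZMod.natCast_eq_zero_iff]; exact hdm
    set μ : ZMod ℓ := ((m : ℕ) : ZMod ℓ) with hμdef
    set ν : ZMod ℓ := ((m ^ 2 * k : ℕ) : ZMod ℓ) with hνdef
    set y₀ : ZMod ℓ := -(ν + 1) * μ⁻¹ with hy₀
    have hνval : ν = μ ^ 2 * ((k : ℕ) : ZMod ℓ) := by rw [hνdef, hμdef]; push_cast; ring
    have haval : a = 4 * ((k : ℕ) : ZMod ℓ) := by rw [ha_def]; push_cast; ring
    have hQ : ∀ y : ZMod ℓ, (IsUnit (ν + 1 + y * μ)) ↔ y ≠ y₀ := by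
      intro y
      have hexp2 : ν + 1 + y * μ = μ * (y - y₀) := by
        rw [hy₀]; field_simp; ring
      rw [hexp2, isUnit_iff_ne_zero, mul_ne_zero_iff, sub_ne_zero]
      exact ⟨fun h => h.2, fun h => ⟨hμ, h⟩⟩
    have hy₀sq : y₀ ^ 2 - a = ((ν - 1) * μ⁻¹) ^ 2 := by
      rw [hy₀, haval, hνval]; field_simp; ring
    have hdvd : ℓ ∣ m ^ 2 * k - 1 ↔ ν = 1 := by
      have hone : 1 ≤ m ^ 2 * k := Nat.one_le_iff_ne_zero.mpr (by positivity)
      rw [← ZMod.natCast_eq_zero_iff, Nat.cast_sub hone, Nat.cast_one, sub_eq_zero,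
        ← hνdef]
    have hδval : χ (y₀ ^ 2 - a) = (if ℓ ∣ m ^ 2 * k - 1 then 0 else 1) := by
      rw [hy₀sq]
      by_cases h1 : ν = 1
      · rw [if_pos (hdvd.mpr h1), h1, sub_self, zero_mul, zero_pow two_ne_zero]
        exact MulChar.map_zero χ
      · rw [if_neg (fun hh => h1 (hdvd.mp hh))]
        exact quadraticChar_sq_one' (mul_ne_zero (sub_ne_zero.mpr h1) (inv_ne_zero hμ))
    have hrem : ∀ F : ZMod ℓ → ℤ, (∑ y : ZMod ℓ, if y ≠ y₀ then F y else 0)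
        = (∑ y : ZMod ℓ, F y) - F y₀ := by
      intro F
      rw [← Finset.sum_filter, Finset.filter_ne', Finset.sum_erase_eq_sub (mem_univ y₀)]
    have hgy : ∀ y : ZMod ℓ, g y = if y ≠ y₀ then (χ (y ^ 2 - a)) ^ (w + 1) else 0 := by
      intro y
      simp only [hg]
      exact if_congr (hQ y) rfl rfl
    have hsplit : ∑ y : ZMod ℓ, g y
        = (∑ y : ZMod ℓ, (χ (y ^ 2 - a)) ^ (w + 1)) - (χ (y₀ ^ 2 - a)) ^ (w + 1) :=
      (Finset.sum_congr rfl fun y _ => hgy y).trans (hrem _)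
    rw [hsplit]
    by_cases hw : Even w
    · simp_rw [hexp, if_pos hw, if_neg hdm]
      rw [hSfull1, hδval]
      ring
    · simp_rw [hexp, if_neg hw, if_neg hdm]
      rw [hSfull2, hχa, hδval]
      split_ifs <;> ring

lemma geom_helper (L D S1 S2 : ℝ) (hL : 1 < L) (hD : D ≠ 0) (f : ℕ → ℝ)
    (hf : ∀ w, f w = (if Even w then S1 else S2) / (L ^ (w + 1) * D)) :
    HasSum f ((S1 * L + S2) / (D * (L ^ 2 - 1))) := by
  have hL0 : L ≠ 0 := by linarith
  have hr0 : (0 : ℝ) ≤ 1 / L := by positivity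
  have hr1 : 1 / L < 1 := by rw [div_lt_one (by linarith)]; exact hL
  have h1 := hasSum_geometric_of_lt_one hr0 hr1
  have h2 := hasSum_geometric_of_abs_lt_one (r := -(1 / L))
    (by rwa [abs_neg, abs_of_nonneg hr0])
  have H := (h1.mul_left ((S1 + S2) / 2 / (L * D))).add
    (h2.mul_left ((S1 - S2) / 2 / (L * D)))
  have hfx : ∀ w, (S1 + S2) / 2 / (L * D) * (1 / L) ^ w
      + (S1 - S2) / 2 / (L * D) * (-(1 / L)) ^ w = f w := by
    intro w
    rw [hf w]
    have hX : L ^ w ≠ 0 := pow_ne_zero _ hL0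
    rcases Nat.even_or_odd w with hw | hw
    · rw [hw.neg_pow, if_pos hw, div_pow, one_pow, pow_succ]
      field_simp
      ring
    · rw [hw.neg_pow, if_neg (Nat.not_even_iff_odd.mpr hw), div_pow, one_pow, pow_succ]
      field_simp
      ring
  have h1' : L - 1 ≠ 0 := sub_ne_zero.mpr (ne_of_gt hL)
  have h2' : L + 1 ≠ 0 := by positivity
  have hval : (S1 + S2) / 2 / (L * D) * (1 - 1 / L)⁻¹
      + (S1 - S2) / 2 / (L * D) * (1 - -(1 / L))⁻¹
      = (S1 * L + S2) / (D * (L ^ 2 - 1)) := by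
    have hsq : L ^ 2 - 1 = (L - 1) * (L + 1) := by ring
    have e1 : (1 - 1 / L)⁻¹ = L / (L - 1) := by rw [one_sub_div hL0, inv_div]
    have e2 : (1 - -(1 / L))⁻¹ = L / (L + 1) := by rw [sub_neg_eq_add, one_add_div hL0, inv_div]
    rw [e1, e2, hsq, div_mul_div_comm, div_mul_div_comm,
      div_add_div _ _ (mul_ne_zero (mul_ne_zero hL0 hD) h1') (mul_ne_zero (mul_ne_zero hL0 hD) h2'),
      div_eq_div_iff (mul_ne_zero (mul_ne_zero (mul_ne_zero hL0 hD) h1')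
        (mul_ne_zero (mul_ne_zero hL0 hD) h2')) (mul_ne_zero hD (mul_ne_zero h1' h2'))]
    ring
  rw [← funext hfx, ← hval]
  exact H

theorem formula_for_P (m k : ℕ) (hm : 1 ≤ m) (hk : 1 ≤ k)
    (ℓ : ℕ) [Fact ℓ.Prime] (hℓ : ¬ℓ ∣ 2 * k) :
    HasSum
      (fun w : ℕ =>
        (Tpp m k ℓ (w + 1) : ℝ) /
          ((ℓ : ℝ) ^ (2 * (w + 1) - 1) * ((ℓ : ℝ) - if ℓ ∣ m then 0 else 1)))
      (((ℓ : ℝ) ^ 3 - (if ℓ ∣ m then 0 else 1) * (ℓ : ℝ) ^ 2 -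
          (1 + (if ℓ ∣ m then 0 else 1) * (if ℓ ∣ m ^ 2 * k - 1 then 0 else 1)) * ℓ -
          1 - (if ℓ ∣ m ^ 2 * k - 1 then 0 else 1) * (legendreSym ℓ k : ℝ)) /
        ((((ℓ : ℝ) ^ 2 - 1) * ((ℓ : ℝ) - if ℓ ∣ m then 0 else 1))) - 1) := by
  have hp : ℓ.Prime := Fact.out
  have hℓ2 : ℓ ≠ 2 := by rintro rfl; exact hℓ ⟨k, rfl⟩
  have hℓk : ¬ℓ ∣ k := fun h => hℓ (h.mul_left 2)
  have hL1 : (1 : ℝ) < (ℓ : ℝ) := by exact_mod_cast hp.one_lt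
  have hL0 : (ℓ : ℝ) ≠ 0 := by linarith
  have hLm1 : (ℓ : ℝ) - 1 ≠ 0 := sub_ne_zero.mpr (ne_of_gt hL1)
  have hLp1 : (ℓ : ℝ) + 1 ≠ 0 := by positivity
  have hone : 1 ≤ m ^ 2 * k := Nat.one_le_iff_ne_zero.mpr (by positivity)
  have hD : ((ℓ : ℝ) - if ℓ ∣ m then 0 else 1) ≠ 0 := by
    split_ifs
    · rw [sub_zero]; exact hL0
    · exact hLm1
  set S1 : ℝ := -1 - (if ℓ ∣ m then 0 else 1) * (if ℓ ∣ m ^ 2 * k - 1 then 0 else 1) with hS1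
  set S2 : ℝ := (ℓ : ℝ) - 1 - (legendreSym ℓ k : ℝ)
      - (if ℓ ∣ m then 0 else 1) * (if ℓ ∣ m ^ 2 * k - 1 then 0 else 1) with hS2
  have hf : ∀ w : ℕ,
      (Tpp m k ℓ (w + 1) : ℝ) /
          ((ℓ : ℝ) ^ (2 * (w + 1) - 1) * ((ℓ : ℝ) - if ℓ ∣ m then 0 else 1))
        = (if Even w then S1 else S2) / ((ℓ : ℝ) ^ (w + 1) * ((ℓ : ℝ) - if ℓ ∣ m then 0 else 1)) := by
    intro w
    rw [Tpp_eq m k ℓ hm hk hℓ w]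
    have h2w : 2 * (w + 1) - 1 = w + (w + 1) := by omega
    rw [h2w, pow_add]
    have hX : ((ℓ : ℝ)) ^ w ≠ 0 := pow_ne_zero _ hL0
    have hY : ((ℓ : ℝ)) ^ (w + 1) ≠ 0 := pow_ne_zero _ hL0
    rw [hS1, hS2]
    split_ifs with h1 h2 h3 <;> push_cast <;> field_simp <;> ring
  have H := geom_helper (ℓ : ℝ) ((ℓ : ℝ) - if ℓ ∣ m then 0 else 1) S1 S2 hL1 hD _ hf
  convert H using 1
  rw [hS1, hS2]
  by_cases hdm : ℓ ∣ m
  · have hδ1 : ¬ℓ ∣ m ^ 2 * k - 1 := by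
      intro hdN
      have hN : ℓ ∣ m ^ 2 * k := Dvd.dvd.mul_right (dvd_pow hdm two_ne_zero) k
      have h1 : ℓ ∣ m ^ 2 * k - (m ^ 2 * k - 1) := Nat.dvd_sub hN hdN
      rw [Nat.sub_sub_self hone] at h1
      exact hp.one_lt.ne' (Nat.dvd_one.mp h1)
    rw [if_pos hdm, if_neg hδ1, sub_zero]
    rw [show ((ℓ : ℝ) ^ 2 - 1) = ((ℓ : ℝ) - 1) * ((ℓ : ℝ) + 1) from by ring]
    field_simp
    ring
  · rw [if_neg hdm]
    by_cases hdN : ℓ ∣ m ^ 2 * k - 1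
    · have hμ : ((m : ℕ) : ZMod ℓ) ≠ 0 := by
        rw [Ne, ZMod.natCast_eq_zero_iff]; exact hdm
      have hκ : ((k : ℕ) : ZMod ℓ) ≠ 0 := by
        rw [Ne, ZMod.natCast_eq_zero_iff]; exact hℓk
      have hν : ((m : ℕ) : ZMod ℓ) ^ 2 * ((k : ℕ) : ZMod ℓ) = 1 := by
        have h0 : ((m ^ 2 * k - 1 : ℕ) : ZMod ℓ) = 0 :=
          (ZMod.natCast_eq_zero_iff _ _).mpr hdN
        rw [Nat.cast_sub hone, Nat.cast_one, sub_eq_zero] at h0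
        rw [← h0]; push_cast; ring
      have hq : legendreSym ℓ (k : ℤ) = 1 := by
        have hksq : ((k : ℕ) : ZMod ℓ) = (((m : ℕ) : ZMod ℓ))⁻¹ * (((m : ℕ) : ZMod ℓ))⁻¹ := by
          field_simp
          rw [← hν]; ring
        refine (legendreSym.eq_one_iff' ℓ ?_).mpr ⟨(((m : ℕ) : ZMod ℓ))⁻¹, hksq⟩
        exact_mod_cast hκ
      rw [if_pos hdN, hq]
      push_cast
      rw [show ((ℓ : ℝ) ^ 2 - 1) = ((ℓ : ℝ) - 1) * ((ℓ : ℝ) + 1) from by ring]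
      field_simp
      ring
    · rw [if_neg hdN]
      rw [show ((ℓ : ℝ) ^ 2 - 1) = ((ℓ : ℝ) - 1) * ((ℓ : ℝ) + 1) from by ring]
      field_simp
      ring
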